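/- Let i : Cat → n-Cat be the inclusion of categories into strict n-categories, with induced functor i_* : Psh(Δ) → Psh(Θ_n) (right adjoint to the restriction i*). Then a morphism f of simplicial sets is a trivial fibration (RLP against all monomorphisms) if and only if i_*(f) is a trivial fibration of presheaves on Θ_n. -/

import Mathlib

open CategoryTheory CategoryTheory.Limits

universe w v u

namespace Paper

variable {M : Type u} [Category.{v} M]

/-- The class of morphisms with the left lifting property with respect to every morphism in `C`. -/
def llp (C : MorphismProperty M) : MorphismProperty M :=
  fun _ _ i => ∀ ⦃Z T : M⦄ (p : Z ⟶ T), C p → HasLiftingProperty i p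

/-- The class of morphisms with the right lifting property with respect to every morphism in `C`. -/
def rlp (C : MorphismProperty M) : MorphismProperty M :=
  fun _ _ p => ∀ ⦃U V : M⦄ (i : U ⟶ V), C i → HasLiftingProperty i p

/-- Stability under retracts (in the arrow category). -/
def StableUnderRetracts (P : MorphismProperty M) : Prop :=
  ∀ ⦃X Y X' Y' : M⦄ (f : X ⟶ Y) (f' : X' ⟶ Y')
    (i : Arrow.mk f' ⟶ Arrow.mk f) (r : Arrow.mk f ⟶ Arrow.mk f'),
      i ≫ r = 𝟙 _ → P f → P f'

/-- The restriction of a transfinite sequence to the indices below `b`. -/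
def restrictionLT {β : Type w} [Preorder β] (F : β ⥤ M) (b : β) : {i : β // i < b} ⥤ M :=
  (Monotone.functor (f := fun i : {i : β // i < b} => (i : β)) fun _ _ h => h) ⋙ F

/-- The cocone over the restriction of `F` to indices `< b`, with apex `F.obj b`. -/
@[simps]
def coconeLT {β : Type w} [Preorder β] (F : β ⥤ M) (b : β) :
    Cocone (restrictionLT F b) where
  pt := F.obj b
  ι :=
    { app := fun i => F.map (homOfLE i.2.le)
      naturality := fun i j g => by
        dsimp [restrictionLT, Monotone.functor]
        rw [Category.comp_id, ← F.map_comp]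
        congr 1 }

/-- A class of morphisms is stable under transfinite composition if, for every
well-ordered continuous sequence whose successor maps lie in `P`, the canonical map from the
first object to a colimit of the sequence lies in `P`. -/
def StableUnderTransfiniteComposition (P : MorphismProperty M) : Prop :=
  ∀ (β : Type w) (_ : LinearOrder β) (_ : OrderBot β) (_ : SuccOrder β)
    (_ : WellFoundedLT β) (F : β ⥤ M),
    (∀ b : β, Order.IsSuccLimit b → Nonempty (IsColimit (coconeLT F b))) →
    (∀ b : β, ¬IsMax b → P (F.map (homOfLE (Order.le_succ b)))) →
    ∀ (c : Cocone F), IsColimit c → P (c.ι.app ⊥)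

/-- Trivial fibrations: morphisms with the right lifting property with respect to all
monomorphisms. -/
def IsTrivFib {X Y : M} (f : X ⟶ Y) : Prop :=
  ∀ ⦃U V : M⦄ (i : U ⟶ V), Mono i → HasLiftingProperty i f

end Paper

open Paper CategoryTheory CategoryTheory.Limits in
/-- Abstract form of: for the inclusion `i : Δ = Θ₁ → Θₙ` (a fully faithful functor which
admits a left adjoint `t`, the truncation), a morphism `f` of simplicial sets is a trivial
fibration if and only if `i_*(f)` is a trivial fibration of presheaves on `Θₙ`, where `i_*`
is the right adjoint of the restriction functor `i^*`. -/
theorem stmt5 {Θ : Type} [SmallCategory Θ]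
    (i : SimplexCategory ⥤ Θ) [i.Full] [i.Faithful]
    (t : Θ ⥤ SimplexCategory) (adj : t ⊣ i)
    (iLowerStar : (SimplexCategoryᵒᵖ ⥤ Type) ⥤ (Θᵒᵖ ⥤ Type))
    (adj2 : (Functor.whiskeringLeft SimplexCategoryᵒᵖ Θᵒᵖ Type).obj i.op ⊣ iLowerStar)
    {X Y : SimplexCategoryᵒᵖ ⥤ Type} (f : X ⟶ Y) :
    IsTrivFib f ↔ IsTrivFib (iLowerStar.map f) := by
  
  set iStar := (Functor.whiskeringLeft SimplexCategoryᵒᵖ Θᵒᵖ Type).obj i.op with hiStar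
  set tStar := (Functor.whiskeringLeft Θᵒᵖ SimplexCategoryᵒᵖ Type).obj t.op with htStar
  have adj3 : tStar ⊣ iStar :=
    (adj.op).whiskerLeft (C := Type)
  -- the counit of `adj` is an isomorphism since `i` is fully faithful
  have e : i.op ⋙ t.op ≅ 𝟭 SimplexCategoryᵒᵖ := (NatIso.op (asIso adj.counit)).symm
  have α : tStar ⋙ iStar ≅ 𝟭 (SimplexCategoryᵒᵖ ⥤ Type) :=
    NatIso.ofComponents
      (fun P => Functor.isoWhiskerRight e P ≪≫ P.leftUnitor)
      (fun {P Q} g => by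
        ext d x
        exact (ConcreteCategory.congr_hom (g.naturality (e.hom.app d)) x).symm)
  have β : iLowerStar ⋙ iStar ≅ 𝟭 _ :=
    Adjunction.rightAdjointUniq ((adj3.comp adj2).ofNatIsoLeft α) Adjunction.id
  constructor
  · intro hf U V g hg
    rw [← adj2.hasLiftingProperty_iff]
    apply hf
    rw [NatTrans.mono_iff_mono_app] at hg ⊢
    intro d
    exact hg _
  · intro hf U V g hg
    have h1 : Mono (tStar.map g) := by
      rw [NatTrans.mono_iff_mono_app] at hg ⊢
      intro d
      exact hg _
    have h2 := hf (tStar.map g) h1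
    rw [adj3.hasLiftingProperty_iff] at h2
    haveI := h2
    exact HasLiftingProperty.of_arrow_iso_right g
      (Arrow.isoMk (β.app X) (β.app Y) (by simpa using (β.hom.naturality f).symm))
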